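/- The angle on the square root spiral between the rays of two successive square numbers tends to 2 radians (i.e. 360°/π measured in degrees): lim_{m→∞} Σ_{n=m²+1}^{(m+1)²} arctan(1/√n) = 2. -/

import Mathlib

open Filter Finset Real Topology

lemma arctanDivLim : Tendsto (fun x : ℝ => Real.arctan x / x) (𝓝[≠] 0) (𝓝 1) := by
  have h := (Real.hasDerivAt_arctan 0)
  rw [hasDerivAt_iff_tendsto_slope] at h
  norm_num at h
  refine h.congr fun x => ?_
  simp [slope_fun_def, Real.arctan_zero, div_eq_inv_mul]

lemma lowerLim : Tendsto (fun m : ℕ => (2 * m + 1 : ℝ) * Real.arctan (1 / (m + 1)))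
    atTop (𝓝 2) := by
  have h1 : Tendsto (fun m : ℕ => (1 : ℝ) / (m + 1)) atTop (𝓝[≠] 0) := by
    rw [tendsto_nhdsWithin_iff]
    refine ⟨tendsto_one_div_add_atTop_nhds_zero_nat, .of_forall fun m => ?_⟩
    have : (0:ℝ) < 1 / (m + 1) := by positivity
    simpa using this.ne'
  have h2 := arctanDivLim.comp h1
  have h3 : Tendsto (fun m : ℕ => (2 * m + 1 : ℝ) * (1 / (m + 1))) atTop (𝓝 2) := by
    have he : ∀ m : ℕ, (2 * m + 1 : ℝ) * (1 / (m + 1)) = 2 - 1 / (m + 1) := by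
      intro m
      have : (m : ℝ) + 1 ≠ 0 := by positivity
      field_simp
      ring
    simp_rw [he]
    simpa using tendsto_const_nhds.sub (tendsto_one_div_add_atTop_nhds_zero_nat (𝕜 := ℝ))
  have h4 := h2.mul h3
  norm_num at h4
  refine h4.congr fun m => ?_
  have hne : (1 : ℝ) / (m + 1) ≠ 0 := by positivity
  field_simp [Function.comp]

lemma arctanLeSelf {x : ℝ} (hx : 0 ≤ x) : Real.arctan x ≤ x := by
  have h0 : 0 ≤ Real.arctan x := by
    simpa [Real.arctan_zero] using Real.arctan_strictMono.monotone hx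
  have h := Real.le_tan h0 (Real.arctan_lt_pi_div_two x)
  rwa [Real.tan_arctan] at h

lemma cardIcc (m : ℕ) : (Finset.Icc (m ^ 2 + 1) ((m + 1) ^ 2)).card = 2 * m + 1 := by
  rw [Nat.card_Icc]
  have h : (m + 1) ^ 2 = m ^ 2 + 2 * m + 1 := by ring
  omega

/-- The angle on the square root spiral between the rays of two successive
square numbers tends to `2` radians (`360°/π` in degrees). -/
theorem angle_between_successive_squares_tendsto_two :
    Tendsto
      (fun m : ℕ =>
        ∑ n ∈ (Finset.Icc (m ^ 2 + 1) ((m + 1) ^ 2) : Finset ℕ),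
          Real.arctan (1 / Real.sqrt n))
      atTop (nhds 2) := by
  have hupLim : Tendsto (fun m : ℕ => 2 + (1 : ℝ) / m) atTop (𝓝 2) := by
    have : Tendsto (fun m : ℕ => (1 : ℝ) / m) atTop (𝓝 0) :=
      tendsto_one_div_atTop_nhds_zero_nat
    simpa using tendsto_const_nhds.add this
  refine tendsto_of_tendsto_of_tendsto_of_le_of_le' lowerLim hupLim ?_ ?_
  · -- lower bound
    filter_upwards with m
    have hle : ∀ n ∈ (Finset.Icc (m ^ 2 + 1) ((m + 1) ^ 2) : Finset ℕ),
        Real.arctan (1 / (m + 1)) ≤ Real.arctan (1 / Real.sqrt n) := by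
      intro n hn
      rw [Finset.mem_Icc] at hn
      have hn1 : 1 ≤ n := by omega
      have hs0 : (0 : ℝ) < Real.sqrt n := Real.sqrt_pos.mpr (by exact_mod_cast hn1)
      have hs : Real.sqrt n ≤ (m + 1 : ℝ) := by
        have : (n : ℝ) ≤ ((m + 1 : ℕ) : ℝ) ^ 2 := by exact_mod_cast hn.2
        calc Real.sqrt n ≤ Real.sqrt (((m + 1 : ℕ) : ℝ) ^ 2) := Real.sqrt_le_sqrt this
          _ = ((m + 1 : ℕ) : ℝ) := Real.sqrt_sq (by positivity)
          _ = (m + 1 : ℝ) := by push_cast; ring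
      exact Real.arctan_strictMono.monotone (one_div_le_one_div_of_le hs0 hs)
    have h := Finset.card_nsmul_le_sum _ _ _ hle
    rw [cardIcc] at h
    calc (2 * m + 1 : ℝ) * Real.arctan (1 / (m + 1))
        = (2 * m + 1 : ℕ) • Real.arctan (1 / (m + 1)) := by
          rw [nsmul_eq_mul]; push_cast; ring
      _ ≤ _ := h
  · -- upper bound
    filter_upwards [eventually_ge_atTop 1] with m hm
    have hm0 : (0 : ℝ) < m := by exact_mod_cast hm
    have hle : ∀ n ∈ (Finset.Icc (m ^ 2 + 1) ((m + 1) ^ 2) : Finset ℕ),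
        Real.arctan (1 / Real.sqrt n) ≤ 1 / (m : ℝ) := by
      intro n hn
      rw [Finset.mem_Icc] at hn
      have hnm : (m : ℝ) ≤ Real.sqrt n := by
        have : ((m : ℝ)) ^ 2 ≤ (n : ℝ) := by
          have h' : m ^ 2 ≤ n := by omega
          exact_mod_cast h'
        calc (m : ℝ) = Real.sqrt ((m : ℝ) ^ 2) := (Real.sqrt_sq hm0.le).symm
          _ ≤ Real.sqrt n := Real.sqrt_le_sqrt this
      have hs0 : (0 : ℝ) < Real.sqrt n := lt_of_lt_of_le hm0 hnm
      calc Real.arctan (1 / Real.sqrt n) ≤ 1 / Real.sqrt n :=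
            arctanLeSelf (by positivity)
        _ ≤ 1 / (m : ℝ) := one_div_le_one_div_of_le hm0 hnm
    have h := Finset.sum_le_card_nsmul _ _ _ hle
    rw [cardIcc] at h
    calc (∑ n ∈ (Finset.Icc (m ^ 2 + 1) ((m + 1) ^ 2) : Finset ℕ),
          Real.arctan (1 / Real.sqrt n))
        ≤ (2 * m + 1 : ℕ) • (1 / (m : ℝ)) := h
      _ = 2 + 1 / (m : ℝ) := by
          rw [nsmul_eq_mul]
          push_cast
          field_simp
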